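/- Let P ⊆ ℝ² be measurable with 0 < |P| < ∞, let V be a real vector space of functions ℝ² → ℝ, each differentiable on P with integrable gradient, containing all affine functions. Let Π : V → V be a linear map such that (i) for every v ∈ V the image Πv is an affine function whose (constant) gradient equals avg∇v := (1/|P|)∫_P ∇v dV, and (ii) Πq = q for every affine q ∈ V. Let S : V × V → ℝ be any bilinear form. Then the virtual element local bilinear form A_{h,P}(v, w) := ∫_P ⟪∇(Πv), ∇(Πw)⟫ dV + S(v − Πv, w − Πw) satisfies the polynomial consistency property: A_{h,P}(v, q) = ∫_P ⟪∇v, ∇q⟫ dV for every v ∈ V and every affine function q. In particular the stabilization term does not upset consistency, because (I − Π)q = 0 for affine q. -/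

import Mathlib

open MeasureTheory RealInnerProductSpace

lemma affine_hasGradientAt (g : EuclideanSpace ℝ (Fin 2)) (c : ℝ)
    (x : EuclideanSpace ℝ (Fin 2)) :
    HasGradientAt (fun p => ⟪g, p⟫ + c) g x := by
  rw [hasGradientAt_iff_hasFDerivAt]
  exact ((innerSL ℝ g).hasFDerivAt).add_const c

/-- polynomial consistency of the stabilized VEM local bilinear form.
`V` is a space of functions `ℝ² → ℝ` (containing all affine functions), each with
gradient `G f x` at every `x ∈ P` and integrable gradient; `Π` is a linear map on `V`
such that `Π v` is affine with constant gradient equal to the averaged gradient of `v`,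
and `Π q = q` for affine `q ∈ V`; `S` is any bilinear form on `V`.  Then
`∫_P ⟪∇(Πv), ∇(Πq)⟫ + S(v − Πv, q − Πq) = ∫_P ⟪∇v, ∇q⟫` for every `v ∈ V` and every
affine `q`. -/
theorem vem_stabilized_form_consistency
    (P : Set (EuclideanSpace ℝ (Fin 2))) (hP : MeasurableSet P)
    (hpos : 0 < volume P) (hfin : volume P < ⊤)
    (V : Submodule ℝ (EuclideanSpace ℝ (Fin 2) → ℝ))
    (G : (EuclideanSpace ℝ (Fin 2) → ℝ) →
      EuclideanSpace ℝ (Fin 2) → EuclideanSpace ℝ (Fin 2))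
    (hGrad : ∀ f ∈ V, ∀ x ∈ P, HasGradientAt f (G f x) x)
    (hGint : ∀ f ∈ V, IntegrableOn (G f) P)
    (hAff : ∀ (g : EuclideanSpace ℝ (Fin 2)) (c : ℝ),
      (fun p => ⟪g, p⟫ + c) ∈ V)
    (Pi : V →ₗ[ℝ] V)
    (hPiAff : ∀ v : V, ∃ c : ℝ, (Pi v : EuclideanSpace ℝ (Fin 2) → ℝ)
      = fun p => ⟪(volume P).toReal⁻¹ • ∫ x in P, G (v : EuclideanSpace ℝ (Fin 2) → ℝ) x, p⟫ + c)
    (hPiId : ∀ q : V, (∃ (g : EuclideanSpace ℝ (Fin 2)) (c : ℝ),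
      (q : EuclideanSpace ℝ (Fin 2) → ℝ) = fun p => ⟪g, p⟫ + c) → Pi q = q)
    (S : V →ₗ[ℝ] V →ₗ[ℝ] ℝ) :
    ∀ (v : V) (g : EuclideanSpace ℝ (Fin 2)) (c : ℝ)
      (q : V), (q : EuclideanSpace ℝ (Fin 2) → ℝ) = (fun p => ⟪g, p⟫ + c) →
      (∫ x in P, ⟪G (Pi v : EuclideanSpace ℝ (Fin 2) → ℝ) x,
            G (Pi q : EuclideanSpace ℝ (Fin 2) → ℝ) x⟫)
          + S (v - Pi v) (q - Pi q)
        = ∫ x in P, ⟪G (v : EuclideanSpace ℝ (Fin 2) → ℝ) x, g⟫ := by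
  intro v g c q hq
  have hPiq : Pi q = q := hPiId q ⟨g, c, hq⟩
  -- stabilization term vanishes
  have hS : S (v - Pi v) (q - Pi q) = 0 := by
    rw [hPiq, sub_self, map_zero]
  -- gradient of q on P is g
  have hGq : ∀ x ∈ P, G (q : EuclideanSpace ℝ (Fin 2) → ℝ) x = g := by
    intro x hx
    have h1 := hGrad _ q.2 x hx
    rw [hq] at h1 ⊢
    exact h1.unique (affine_hasGradientAt g c x)
  -- gradient of Pi v on P is the averaged gradient
  set a : EuclideanSpace ℝ (Fin 2) :=
    (volume P).toReal⁻¹ • ∫ x in P, G (v : EuclideanSpace ℝ (Fin 2) → ℝ) x with ha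
  have hGPiv : ∀ x ∈ P, G (Pi v : EuclideanSpace ℝ (Fin 2) → ℝ) x = a := by
    intro x hx
    obtain ⟨c', hc'⟩ := hPiAff v
    have h1 := hGrad _ (Pi v).2 x hx
    rw [hc'] at h1 ⊢
    exact h1.unique (affine_hasGradientAt a c' x)
  have hvol : (volume P).toReal ≠ 0 := by
    simp [ENNReal.toReal_eq_zero_iff, hpos.ne', hfin.ne]
  rw [hS, add_zero]
  rw [setIntegral_congr_fun hP (fun x hx => by rw [hPiq, hGq x hx, hGPiv x hx])]
  have hrhs : ∫ x in P, ⟪G (v : EuclideanSpace ℝ (Fin 2) → ℝ) x, g⟫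
      = ⟪∫ x in P, G (v : EuclideanSpace ℝ (Fin 2) → ℝ) x, g⟫ := by
    calc ∫ x in P, ⟪G (v : EuclideanSpace ℝ (Fin 2) → ℝ) x, g⟫
        = ∫ x in P, ⟪g, G (v : EuclideanSpace ℝ (Fin 2) → ℝ) x⟫ :=
          integral_congr_ae (Filter.Eventually.of_forall fun x => real_inner_comm _ _)
      _ = ⟪g, ∫ x in P, G (v : EuclideanSpace ℝ (Fin 2) → ℝ) x⟫ :=
          integral_inner (hGint _ v.2) g
      _ = _ := real_inner_comm _ _
  rw [hrhs, setIntegral_const, ha, real_inner_smul_left, smul_eq_mul,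
    ← mul_assoc, measureReal_def, mul_inv_cancel₀ hvol, one_mul]
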